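/- arXiv:1508.01858 — 3 statements merged into one kernel-verified Lean document; each statement's English description precedes it below -/
import Mathlib

section
/- For every nonnegative integer n, the n-th Bernoulli-Carlitz number satisfies BC_n = Σ_{j ≥ 0, r^j − 1 ≤ n} ((−1)^j D_j / L_j^2) · S2_C(n, r^j − 1), where S2_C denotes the Stirling-Carlitz numbers of the second kind (the sum is finite since S2_C(n, m) = 0 whenever n < m). -/
open scoped Classical
open PowerSeries Finset

noncomputable section

variable (F : Type) [Field F] [Fintype F]

/-- The rational function field `K = 𝔽_r(T)`. -/
abbrev K : Type := RatFunc F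

/-- `r`, the cardinality of the finite field of constants. -/
def rr : ℕ := Fintype.card F

/-- The variable `T` of the rational function field. -/
def Tv : K F := RatFunc.X

/-- `[i] = T^{r^i} - T`. -/
def br (i : ℕ) : K F := Tv F ^ (rr F) ^ i - Tv F

/-- `D_0 = 1`, `D_i = [i] · D_{i-1}^r`. -/
def D : ℕ → K F
  | 0 => 1
  | i + 1 => br F (i + 1) * D i ^ rr F

/-- `L_0 = 1`, `L_i = [i] · L_{i-1}`. -/
def L : ℕ → K F
  | 0 => 1
  | i + 1 => br F (i + 1) * L i

/-- The Carlitz factorial `Π(n) = ∏_j D_j^{c_j}`, where `c_j = n / r^j % r` are the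
base-`r` digits of `n` (all digits with index `> n` vanish since `r ≥ 2`). -/
def Cf (n : ℕ) : K F := ∏ j ∈ Finset.range (n + 1), D F j ^ (n / (rr F) ^ j % rr F)

/-- The Carlitz logarithm `log_C(z) = Σ_{i ≥ 0} (-1)^i z^{r^i} / L_i`: the coefficient of
`z^m` is `(-1)^i / L_i` if `m = r^i` and `0` otherwise (note `i ≤ r^i = m` since `r ≥ 2`). -/
def logC : PowerSeries (K F) :=
  PowerSeries.mk fun m =>
    ∑ i ∈ Finset.range (m + 1), if m = (rr F) ^ i then (-1 : K F) ^ i / L F i else 0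

/-- The Carlitz exponential `e_C(z) = Σ_{i ≥ 0} z^{r^i} / D_i`. -/
def eC : PowerSeries (K F) :=
  PowerSeries.mk fun m =>
    ∑ i ∈ Finset.range (m + 1), if m = (rr F) ^ i then 1 / D F i else 0

/-- The power series `log_C(z)/z`. -/
def logCdivZ : PowerSeries (K F) :=
  PowerSeries.mk fun n => PowerSeries.coeff (n + 1) (logC F)

/-- The power series `e_C(z)/z`. -/
def eCdivZ : PowerSeries (K F) :=
  PowerSeries.mk fun n => PowerSeries.coeff (n + 1) (eC F)

lemma two_le_rr : 2 ≤ rr F := Fintype.one_lt_card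

lemma rr_pow_pos (j : ℕ) : 0 < rr F ^ j := pow_pos (by have := two_le_rr F; omega) j

lemma br_zero : br F 0 = 0 := by simp [br]

lemma br_ne (i : ℕ) (hi : 1 ≤ i) : br F i ≠ 0 := by
  have h2 : 2 ≤ rr F ^ i :=
    le_trans (two_le_rr F) (Nat.le_self_pow (by omega) _)
  intro h
  have hX : (Tv F) = algebraMap (Polynomial F) (RatFunc F) Polynomial.X :=
    (RatFunc.algebraMap_X).symm
  rw [br, hX, ← map_pow, ← map_sub] at h
  have h0 : (Polynomial.X ^ (rr F ^ i) - Polynomial.X : Polynomial F) = 0 :=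
    RatFunc.algebraMap_injective F (by simpa using h)
  have hc : (Polynomial.X ^ (rr F ^ i) - Polynomial.X : Polynomial F).coeff (rr F ^ i) = 1 := by
    rw [Polynomial.coeff_sub, Polynomial.coeff_X_pow, if_pos rfl, Polynomial.coeff_X,
      if_neg (by omega), sub_zero]
  rw [h0] at hc
  simp at hc

lemma D_succ (i : ℕ) : D F (i + 1) = br F (i + 1) * D F i ^ rr F := rfl
lemma L_succ (i : ℕ) : L F (i + 1) = br F (i + 1) * L F i := rfl
lemma D_zero : D F 0 = 1 := rfl
lemma L_zero : L F 0 = 1 := rfl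

lemma D_ne (i : ℕ) : D F i ≠ 0 := by
  induction i with
  | zero => simp [D_zero]
  | succ i ih =>
      rw [D_succ]
      exact mul_ne_zero (br_ne F _ (by omega)) (pow_ne_zero _ ih)

lemma L_ne (i : ℕ) : L F i ≠ 0 := by
  induction i with
  | zero => simp [L_zero]
  | succ i ih =>
      rw [L_succ]
      exact mul_ne_zero (br_ne F _ (by omega)) ih

lemma Cf_ne (n : ℕ) : Cf F n ≠ 0 :=
  Finset.prod_ne_zero_iff.mpr fun i _ => pow_ne_zero _ (D_ne F i)

lemma D_eq_L_mul (j : ℕ) : D F j = L F j * ∏ i ∈ Finset.range j, D F i ^ (rr F - 1) := by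
  induction j with
  | zero => simp [D_zero, L_zero]
  | succ j ih =>
      have hr : rr F = (rr F - 1) + 1 := by have := two_le_rr F; omega
      rw [D_succ, L_succ, Finset.prod_range_succ]
      conv_lhs => rw [hr, pow_succ]
      nth_rewrite 2 [ih]
      ring

lemma digit (i j : ℕ) : (rr F ^ j - 1) / rr F ^ i % rr F = if i < j then rr F - 1 else 0 := by
  have h2 := two_le_rr F
  by_cases hij : i < j
  · rw [if_pos hij]
    have ha : 0 < rr F ^ i := rr_pow_pos F i
    have hb : 0 < rr F ^ (j - i) := rr_pow_pos F _
    have hab : rr F ^ i * rr F ^ (j - i) = rr F ^ j := by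
      rw [← pow_add]; congr 1; omega
    have hmul : rr F ^ i * (rr F ^ (j - i) - 1) = rr F ^ j - rr F ^ i := by
      rw [Nat.mul_sub, mul_one, hab]
    have hle : rr F ^ i ≤ rr F ^ j := Nat.pow_le_pow_right (by omega) (by omega)
    have hdiv : (rr F ^ j - 1) / rr F ^ i = rr F ^ (j - i) - 1 := by
      have he : rr F ^ j - 1 = rr F ^ i * (rr F ^ (j - i) - 1) + (rr F ^ i - 1) := by
        rw [hmul]; omega
      rw [he, Nat.mul_add_div ha, Nat.div_eq_of_lt (by omega), add_zero]
    rw [hdiv]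
    have hc : rr F * rr F ^ (j - i - 1) = rr F ^ (j - i) := by
      rw [← pow_succ']; congr 1; omega
    have hc1 : 0 < rr F ^ (j - i - 1) := rr_pow_pos F _
    have he2 : rr F ^ (j - i) - 1 = rr F * (rr F ^ (j - i - 1) - 1) + (rr F - 1) := by
      have hms : rr F * (rr F ^ (j - i - 1) - 1) = rr F * rr F ^ (j - i - 1) - rr F := by
        rw [Nat.mul_sub, mul_one]
      have hle2 : rr F ≤ rr F ^ (j - i) := Nat.le_self_pow (by omega) _
      rw [hms, hc]; omega
    rw [he2, Nat.mul_add_mod, Nat.mod_eq_of_lt (by omega)]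
  · rw [if_neg hij]
    have hlt : rr F ^ j - 1 < rr F ^ i := by
      have h1 : rr F ^ j ≤ rr F ^ i := Nat.pow_le_pow_right (by omega) (by omega)
      have := rr_pow_pos F j; omega
    rw [Nat.div_eq_of_lt hlt, Nat.zero_mod]

lemma Cf_rpow (j : ℕ) : Cf F (rr F ^ j - 1) = ∏ i ∈ Finset.range j, D F i ^ (rr F - 1) := by
  have h2 := two_le_rr F
  have hj : j ≤ rr F ^ j - 1 := by
    have := Nat.lt_pow_self (n := j) (by omega : 1 < rr F); omega
  rw [Cf]
  have step1 : ∏ i ∈ Finset.range (rr F ^ j - 1 + 1), D F i ^ ((rr F ^ j - 1) / rr F ^ i % rr F)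
      = ∏ i ∈ Finset.range (rr F ^ j - 1 + 1), (if i < j then D F i ^ (rr F - 1) else 1) := by
    apply Finset.prod_congr rfl; intro i _
    rw [digit F i j]
    split_ifs <;> simp
  rw [step1]
  have hsub : (∏ i ∈ Finset.range j, if i < j then D F i ^ (rr F - 1) else 1)
      = ∏ i ∈ Finset.range (rr F ^ j - 1 + 1), (if i < j then D F i ^ (rr F - 1) else 1) :=
    Finset.prod_subset (Finset.range_subset_range.mpr (by omega))
      (fun x _ hx => by rw [if_neg (by simpa using hx)])
  rw [← hsub]
  exact Finset.prod_congr rfl fun i hi => if_pos (Finset.mem_range.mp hi)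

lemma char_facts : ∃ p s : ℕ, Nat.Prime p ∧ rr F = p ^ s ∧ CharP (K F) p
    ∧ CharP (PowerSeries (K F)) p := by
  haveI hcp : CharP F (ringChar F) := ringChar.charP F
  obtain ⟨s, hp, hcard⟩ := FiniteField.card F (ringChar F)
  haveI hK : CharP (K F) (ringChar F) :=
    charP_of_injective_ringHom (algebraMap F (K F)).injective _
  haveI hPS : CharP (PowerSeries (K F)) (ringChar F) :=
    charP_of_injective_ringHom (PowerSeries.C_injective (R := K F)) _
  exact ⟨ringChar F, (s : ℕ), hp, hcard, hK, hPS⟩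

lemma frob_sub (x y : K F) (m : ℕ) :
    (x - y) ^ rr F ^ m = x ^ rr F ^ m - y ^ rr F ^ m := by
  obtain ⟨p, s, hp, hr, hK, _⟩ := char_facts F
  haveI := hK; haveI : Fact p.Prime := ⟨hp⟩
  rw [hr, ← pow_mul, sub_pow_char_pow]

lemma frob_sum_K (m : ℕ) (t : Finset ℕ) (f : ℕ → K F) :
    (∑ i ∈ t, f i) ^ rr F ^ m = ∑ i ∈ t, f i ^ rr F ^ m := by
  obtain ⟨p, s, hp, hr, hK, _⟩ := char_facts F
  haveI := hK; haveI : Fact p.Prime := ⟨hp⟩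
  rw [hr, ← pow_mul, sum_pow_char_pow]

lemma frob_add_PS (x y : PowerSeries (K F)) (m : ℕ) :
    (x + y) ^ rr F ^ m = x ^ rr F ^ m + y ^ rr F ^ m := by
  obtain ⟨p, s, hp, hr, _, hPS⟩ := char_facts F
  haveI := hPS; haveI : Fact p.Prime := ⟨hp⟩
  rw [hr, ← pow_mul, add_pow_char_pow]

lemma frob_sum_PS (m : ℕ) (t : Finset ℕ) (f : ℕ → PowerSeries (K F)) :
    (∑ i ∈ t, f i) ^ rr F ^ m = ∑ i ∈ t, f i ^ rr F ^ m := by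
  obtain ⟨p, s, hp, hr, _, hPS⟩ := char_facts F
  haveI := hPS; haveI : Fact p.Prime := ⟨hp⟩
  rw [hr, ← pow_mul, sum_pow_char_pow]

lemma mono_pow (k e : ℕ) (a : K F) :
    (PowerSeries.monomial k a) ^ e = PowerSeries.monomial (k * e) (a ^ e) := by
  have hm : ∀ (k : ℕ) (a : K F),
      PowerSeries.monomial k a = PowerSeries.C a * PowerSeries.X ^ k := by
    intro k a
    ext m
    rw [PowerSeries.coeff_monomial, PowerSeries.coeff_C_mul_X_pow]
  rw [hm, hm, mul_pow, ← map_pow, ← pow_mul]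

lemma coeff_frob (f : PowerSeries (K F)) (j m : ℕ) :
    PowerSeries.coeff m (f ^ rr F ^ j)
      = if rr F ^ j ∣ m then (PowerSeries.coeff (m / rr F ^ j) f) ^ rr F ^ j else 0 := by
  have h2 := two_le_rr F
  have hq : 0 < rr F ^ j := rr_pow_pos F j
  set t : PowerSeries (K F) :=
    ∑ k ∈ Finset.range (m + 1), PowerSeries.monomial k (PowerSeries.coeff k f)
    with ht
  have hcoefft : ∀ l ≤ m, PowerSeries.coeff l t = PowerSeries.coeff l f := by
    intro l hl
    rw [ht, map_sum]
    simp only [PowerSeries.coeff_monomial]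
    rw [Finset.sum_ite_eq, if_pos (Finset.mem_range.mpr (by omega))]
  have hdvd : PowerSeries.X ^ (m + 1) ∣ (f - t) :=
    PowerSeries.X_pow_dvd_iff.mpr fun l hl => by
      rw [map_sub, hcoefft l (by omega), sub_self]
  obtain ⟨g, hg⟩ := hdvd
  have hfe : f = t + (f - t) := by ring
  have hsplit : f ^ rr F ^ j = t ^ rr F ^ j + (PowerSeries.X ^ (m + 1) * g) ^ rr F ^ j := by
    calc f ^ rr F ^ j = (t + (f - t)) ^ rr F ^ j := by rw [← hfe]
      _ = t ^ rr F ^ j + (f - t) ^ rr F ^ j := frob_add_PS F t (f - t) j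
      _ = t ^ rr F ^ j + (PowerSeries.X ^ (m + 1) * g) ^ rr F ^ j := by rw [← hg]
  rw [hsplit, map_add]
  have hzero : PowerSeries.coeff m ((PowerSeries.X ^ (m + 1) * g) ^ rr F ^ j) = 0 := by
    have hd : (PowerSeries.X : PowerSeries (K F)) ^ (m + 1)
        ∣ (PowerSeries.X ^ (m + 1) * g) ^ rr F ^ j :=
      dvd_trans (dvd_mul_right _ g) (dvd_pow_self _ (by omega))
    exact PowerSeries.X_pow_dvd_iff.mp hd m (by omega)
  rw [hzero, add_zero, ht, frob_sum_PS]
  simp only [mono_pow]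
  rw [map_sum]
  simp only [PowerSeries.coeff_monomial]
  by_cases hd : rr F ^ j ∣ m
  · obtain ⟨c, hc⟩ := hd
    have hq1 : 1 * c ≤ rr F ^ j * c := Nat.mul_le_mul_right c hq
    have hdivm : m / rr F ^ j = c := by rw [hc, Nat.mul_div_cancel_left _ hq]
    rw [if_pos ⟨c, hc⟩, hdivm]
    have hcond : ∀ k, (m = k * rr F ^ j) ↔ (k = c) := by
      intro k
      constructor
      · intro h
        have h1 : k * rr F ^ j = c * rr F ^ j := by rw [← h, hc, mul_comm]
        exact Nat.eq_of_mul_eq_mul_right hq h1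
      · rintro rfl; rw [hc, mul_comm]
    simp only [hcond]
    rw [Finset.sum_ite_eq', if_pos (Finset.mem_range.mpr (by omega))]
  · rw [if_neg hd]
    apply Finset.sum_eq_zero; intro k _
    exact if_neg fun h => hd ⟨k, by rw [h, mul_comm]⟩

lemma eC_pow (j m : ℕ) :
    PowerSeries.coeff m (eC F ^ rr F ^ j)
      = ∑ i ∈ Finset.range (m + 1),
          if m = rr F ^ (i + j) then (1 / D F i) ^ rr F ^ j else 0 := by
  have h2 := two_le_rr F
  have hq : 0 < rr F ^ j := rr_pow_pos F j
  rw [coeff_frob]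
  by_cases hd : rr F ^ j ∣ m
  · rw [if_pos hd]
    obtain ⟨c, hc⟩ := hd
    have hq1 : 1 * c ≤ rr F ^ j * c := Nat.mul_le_mul_right c hq
    have hcm : c ≤ m := by omega
    have hdivm : m / rr F ^ j = c := by rw [hc, Nat.mul_div_cancel_left _ hq]
    rw [hdivm, eC, PowerSeries.coeff_mk, frob_sum_K]
    have hiff : ∀ i, (c = rr F ^ i) ↔ (m = rr F ^ (i + j)) := by
      intro i
      rw [hc, pow_add]
      constructor
      · rintro rfl; ring
      · intro h
        exact Nat.eq_of_mul_eq_mul_left hq (h.trans (mul_comm _ _))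
    have hterm : ∀ i, ((if c = rr F ^ i then (1 : K F) / D F i else 0) ^ rr F ^ j)
        = if m = rr F ^ (i + j) then (1 / D F i) ^ rr F ^ j else 0 := by
      intro i
      rw [apply_ite (fun x : K F => x ^ rr F ^ j), zero_pow (by omega)]
      exact if_congr (hiff i) rfl rfl
    rw [Finset.sum_congr rfl fun i _ => hterm i]
    apply Finset.sum_subset (Finset.range_subset_range.mpr (by omega : c + 1 ≤ m + 1))
    intro i _ hx
    apply if_neg
    intro h
    have hci : c = rr F ^ i := (hiff i).mpr h
    have hlt : i < rr F ^ i := Nat.lt_pow_self (n := i) (by omega)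
    have hx' : ¬ i < c + 1 := by simpa using hx
    omega
  · rw [if_neg hd]
    symm
    apply Finset.sum_eq_zero
    intro i _
    apply if_neg
    intro h
    exact hd ⟨rr F ^ i, by rw [h, pow_add, mul_comm]⟩

lemma keysum (k : ℕ) (hk : 1 ≤ k) :
    ∑ j ∈ Finset.range (k + 1), (-1 : K F) ^ j / L F j * (1 / D F (k - j)) ^ rr F ^ j
      = 0 := by
  have h2 := two_le_rr F
  have hbrk : br F k ≠ 0 := br_ne F k hk
  apply mul_left_cancel₀ hbrk
  rw [mul_zero, Finset.mul_sum]
  have hsplit : ∀ j ∈ Finset.range (k + 1),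
      br F k * ((-1 : K F) ^ j / L F j * (1 / D F (k - j)) ^ rr F ^ j)
        = (-1 : K F) ^ j / L F j * (br F (k - j) / D F (k - j)) ^ rr F ^ j
          + (-1 : K F) ^ j * (br F j / L F j) * (1 / D F (k - j)) ^ rr F ^ j := by
    intro j hj
    have hj' : j ≤ k := Nat.lt_succ_iff.mp (Finset.mem_range.mp hj)
    have e1 : rr F ^ (k - j) * rr F ^ j = rr F ^ k := by
      rw [← pow_add]; congr 1; omega
    have hbr : br F k = br F (k - j) ^ rr F ^ j + br F j := by
      rw [br, br, br, frob_sub, ← pow_mul, e1]; ring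
    rw [hbr, div_pow, div_pow]
    ring
  rw [Finset.sum_congr rfl hsplit, Finset.sum_add_distrib]
  have hA : ∑ j ∈ Finset.range (k + 1),
        (-1 : K F) ^ j / L F j * (br F (k - j) / D F (k - j)) ^ rr F ^ j
      = ∑ j ∈ Finset.range k,
        (-1 : K F) ^ j / L F j * (1 / D F (k - 1 - j) ^ rr F) ^ rr F ^ j := by
    rw [Finset.sum_range_succ, Nat.sub_self, br_zero, zero_div,
      zero_pow (rr_pow_pos F k).ne', mul_zero, add_zero]
    apply Finset.sum_congr rfl
    intro j hj
    have hjk : j < k := Finset.mem_range.mp hj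
    have hkj : k - j = (k - 1 - j) + 1 := by omega
    have hDkj : D F (k - j) = br F (k - j) * D F (k - 1 - j) ^ rr F := by
      rw [hkj, D_succ, ← hkj]
    rw [hDkj, div_mul_cancel_left₀ (br_ne F (k - j) (by omega)), one_div]
  have hB : ∑ j ∈ Finset.range (k + 1),
        (-1 : K F) ^ j * (br F j / L F j) * (1 / D F (k - j)) ^ rr F ^ j
      = - ∑ j ∈ Finset.range k,
        (-1 : K F) ^ j / L F j * (1 / D F (k - 1 - j) ^ rr F) ^ rr F ^ j := by
    rw [Finset.sum_range_succ']
    rw [br_zero, zero_div, mul_zero, zero_mul, add_zero]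
    rw [← Finset.sum_neg_distrib]
    apply Finset.sum_congr rfl
    intro i hi
    have hik : i < k := Finset.mem_range.mp hi
    have hki : k - (i + 1) = k - 1 - i := by omega
    have hL : L F (i + 1) = br F (i + 1) * L F i := L_succ F i
    rw [hki, hL, div_mul_cancel_left₀ (br_ne F (i + 1) (by omega))]
    have hpow : ((1 : K F) / D F (k - 1 - i)) ^ rr F ^ (i + 1)
        = ((1 : K F) / D F (k - 1 - i) ^ rr F) ^ rr F ^ i := by
      rw [div_pow, div_pow, one_pow, one_pow, ← pow_mul]
      congr 2
      exact pow_succ' _ _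
    rw [hpow, pow_succ]
    field_simp
  rw [hA, hB]
  ring

lemma coeff_key (nn m : ℕ) (hm : m ≤ nn) :
    ∑ j ∈ Finset.range (nn + 1),
        (-1 : K F) ^ j / L F j * PowerSeries.coeff (m + 1) (eC F ^ rr F ^ j)
      = if m = 0 then 1 else 0 := by
  have h2 := two_le_rr F
  simp only [eC_pow, Finset.mul_sum]
  have hre : ∀ j i, (-1 : K F) ^ j / L F j *
        (if m + 1 = rr F ^ (i + j) then (1 / D F i) ^ rr F ^ j else 0)
      = if m + 1 = rr F ^ (i + j)
          then (-1 : K F) ^ j / L F j * (1 / D F i) ^ rr F ^ j else 0 := by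
    intro j i; split_ifs <;> simp
  simp only [hre]
  by_cases hex : ∃ kk, m + 1 = rr F ^ kk
  · obtain ⟨kk, hkk⟩ := hex
    have hkm : kk ≤ m := by
      have := Nat.lt_pow_self (n := kk) (by omega : 1 < rr F); omega
    have hinj : ∀ a b : ℕ, rr F ^ a = rr F ^ b → a = b := fun a b h =>
      Nat.pow_right_injective h2 h
    have hinner : ∀ j,
        (∑ i ∈ Finset.range (m + 1 + 1),
          if m + 1 = rr F ^ (i + j)
            then (-1 : K F) ^ j / L F j * (1 / D F i) ^ rr F ^ j else 0)
        = if j ≤ kk then (-1 : K F) ^ j / L F j * (1 / D F (kk - j)) ^ rr F ^ j else 0 := by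
      intro j
      by_cases hjk : j ≤ kk
      · rw [if_pos hjk]
        have hcond : ∀ i, (m + 1 = rr F ^ (i + j)) ↔ (i = kk - j) := by
          intro i
          constructor
          · intro h
            have := hinj kk (i + j) (by rw [← hkk, h]); omega
          · rintro rfl
            rw [hkk]; congr 1; omega
        simp only [hcond]
        rw [Finset.sum_ite_eq', if_pos (Finset.mem_range.mpr (by omega))]
      · rw [if_neg hjk]
        apply Finset.sum_eq_zero; intro i _
        apply if_neg
        intro h
        have := hinj kk (i + j) (by rw [← hkk, h]); omega
    simp only [hinner]
    have hshrink : ∑ j ∈ Finset.range (kk + 1),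
          (if j ≤ kk then (-1 : K F) ^ j / L F j * (1 / D F (kk - j)) ^ rr F ^ j else 0)
        = ∑ j ∈ Finset.range (nn + 1),
          (if j ≤ kk then (-1 : K F) ^ j / L F j * (1 / D F (kk - j)) ^ rr F ^ j else 0) :=
      Finset.sum_subset (Finset.range_subset_range.mpr (by omega))
        (fun x _ hx => if_neg (by simp at hx; omega))
    rw [← hshrink,
      Finset.sum_congr rfl fun j hj => if_pos (Nat.lt_succ_iff.mp (Finset.mem_range.mp hj))]
    rcases Nat.eq_zero_or_pos kk with hk0 | hkpos
    · subst hk0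
      have hm0 : m = 0 := by simp at hkk; omega
      rw [if_pos hm0]
      simp [L_zero, D_zero]
    · rw [keysum F kk hkpos]
      have hge : 2 ≤ rr F ^ kk := le_trans h2 (Nat.le_self_pow (by omega) _)
      rw [if_neg (by omega)]
  · have hm0 : m ≠ 0 := by
      intro h
      exact hex ⟨0, by simp [h]⟩
    rw [if_neg hm0]
    apply Finset.sum_eq_zero; intro j _
    apply Finset.sum_eq_zero; intro i _
    exact if_neg fun h => hex ⟨i + j, h⟩

lemma coeff_eC_zero : PowerSeries.coeff 0 (eC F) = 0 := by
  rw [eC, PowerSeries.coeff_mk, Finset.sum_range_one]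
  simp

lemma eC_eq_X_mul : eC F = PowerSeries.X * eCdivZ F := by
  ext m
  cases m with
  | zero =>
      rw [coeff_eC_zero, PowerSeries.coeff_zero_eq_constantCoeff, map_mul,
        PowerSeries.constantCoeff_X, zero_mul]
  | succ m =>
      rw [PowerSeries.coeff_succ_X_mul, eCdivZ, PowerSeries.coeff_mk]

lemma coeff0_u : PowerSeries.coeff 0 (eCdivZ F) = 1 := by
  have h2 := two_le_rr F
  rw [eCdivZ, PowerSeries.coeff_mk, eC, PowerSeries.coeff_mk]
  have h1 : (1 : ℕ) ≠ rr F ^ 1 := by rw [pow_one]; omega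
  have h0 : (1 : ℕ) = rr F ^ 0 := (pow_zero _).symm
  rw [Finset.sum_range_succ, Finset.sum_range_one, if_neg h1, if_pos h0, add_zero]
  simp only [D_zero]
  norm_num

/-- Theorem 2: `BC_n = Σ_{j ≥ 0, r^j - 1 ≤ n} ((-1)^j D_j / L_j^2) · S2_C(n, r^j - 1)`. -/
theorem bernoulliCarlitz_eq_sum_stirlingCarlitzSecond
    (BC : ℕ → K F) (S2C : ℕ → ℕ → K F)
    (hBC : (PowerSeries.mk fun n => BC n / Cf F n) * eCdivZ F = 1)
    (hS2C : ∀ n k : ℕ,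
      PowerSeries.coeff n (eC F ^ k) / Cf F k = S2C n k / Cf F n)
    (n : ℕ) :
    BC n = ∑ j ∈ (Finset.range (n + 1)).filter (fun j => (rr F) ^ j - 1 ≤ n),
      ((-1 : K F) ^ j * D F j / L F j ^ 2) * S2C n ((rr F) ^ j - 1) := by
  classical
  have h2 := two_le_rr F
  set u := eCdivZ F with hu
  set A := (PowerSeries.mk fun n => BC n / Cf F n) with hA
  set P := ∑ j ∈ Finset.range (n + 1),
      PowerSeries.C ((-1 : K F) ^ j / L F j) * eC F ^ (rr F ^ j - 1) with hP
  have heCX : eC F = PowerSeries.X * u := eC_eq_X_mul F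
  have hPu : ∀ m ≤ n, PowerSeries.coeff m (P * u) = if m = 0 then 1 else 0 := by
    intro m hm
    rw [hP, Finset.sum_mul, map_sum]
    have hterm : ∀ j ∈ Finset.range (n + 1),
        PowerSeries.coeff m
            (PowerSeries.C ((-1 : K F) ^ j / L F j) * eC F ^ (rr F ^ j - 1) * u)
          = (-1 : K F) ^ j / L F j * PowerSeries.coeff (m + 1) (eC F ^ rr F ^ j) := by
      intro j _
      rw [mul_assoc, PowerSeries.coeff_C_mul]
      congr 1
      have h1 : eC F ^ rr F ^ j = PowerSeries.X * (eC F ^ (rr F ^ j - 1) * u) := by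
        calc eC F ^ rr F ^ j = eC F ^ (rr F ^ j - 1) * eC F := by
              rw [← pow_succ]; congr 1
              have := rr_pow_pos F j; omega
          _ = PowerSeries.X * (eC F ^ (rr F ^ j - 1) * u) := by rw [heCX]; ring
      rw [h1, PowerSeries.coeff_succ_X_mul]
    rw [Finset.sum_congr rfl hterm, coeff_key F n m hm]
  have hAu : ∀ m, PowerSeries.coeff m (A * u) = if m = 0 then 1 else 0 := by
    intro m
    rw [hBC, PowerSeries.coeff_one]
  have hu0 : PowerSeries.coeff 0 u = 1 := coeff0_u F
  have hagree : ∀ m, m ≤ n → PowerSeries.coeff m A = PowerSeries.coeff m P := by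
    intro m
    induction m using Nat.strong_induction_on with
    | _ m ih =>
      intro hmn
      have e1 := hAu m
      have e2 := hPu m hmn
      rw [PowerSeries.coeff_mul] at e1 e2
      have hmem : ((m, 0) : ℕ × ℕ) ∈ Finset.HasAntidiagonal.antidiagonal m := by simp
      rw [Finset.sum_eq_sum_sdiff_singleton_add hmem] at e1 e2
      have hrest : ∑ p ∈ Finset.HasAntidiagonal.antidiagonal m \ {(m, 0)},
            PowerSeries.coeff p.1 A * PowerSeries.coeff p.2 u
          = ∑ p ∈ Finset.HasAntidiagonal.antidiagonal m \ {(m, 0)},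
            PowerSeries.coeff p.1 P * PowerSeries.coeff p.2 u := by
        apply Finset.sum_congr rfl
        intro p hp
        obtain ⟨hp1, hp2⟩ := Finset.mem_sdiff.mp hp
        have hsum := Finset.HasAntidiagonal.mem_antidiagonal.mp hp1
        have hne : p ≠ (m, 0) := by simpa using hp2
        have hp1lt : p.1 < m := by
          rcases Nat.lt_or_ge p.1 m with h | h
          · exact h
          · exfalso
            apply hne
            have e1 : p.1 = m := by omega
            have e2 : p.2 = 0 := by omega
            exact Prod.ext e1 e2
        rw [ih p.1 hp1lt (by omega)]
      rw [hrest] at e1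
      have e3 := e1.trans e2.symm
      have h3 := add_left_cancel e3
      rwa [hu0, mul_one, mul_one] at h3
  have hcoeffA : PowerSeries.coeff n A = BC n / Cf F n := by
    rw [hA, PowerSeries.coeff_mk]
  have hcoeffP : PowerSeries.coeff n P
      = ∑ j ∈ Finset.range (n + 1),
          (-1 : K F) ^ j / L F j * PowerSeries.coeff n (eC F ^ (rr F ^ j - 1)) := by
    rw [hP, map_sum]
    exact Finset.sum_congr rfl fun j _ => PowerSeries.coeff_C_mul _ _ _
  have hCfj : ∀ j, Cf F (rr F ^ j - 1) = D F j / L F j := by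
    intro j
    rw [Cf_rpow, D_eq_L_mul F j, mul_comm, mul_div_assoc, div_self (L_ne F j), mul_one]
  have hS2 : ∀ j, S2C n (rr F ^ j - 1)
      = Cf F n * PowerSeries.coeff n (eC F ^ (rr F ^ j - 1)) / Cf F (rr F ^ j - 1) := by
    intro j
    have h := (hS2C n (rr F ^ j - 1)).symm
    have h' := (div_eq_iff (Cf_ne F n)).mp h
    rw [h']; ring
  have hvanish : ∀ j ∈ Finset.range (n + 1),
      ((-1 : K F) ^ j * D F j / L F j ^ 2) * S2C n (rr F ^ j - 1) ≠ 0 →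
        rr F ^ j - 1 ≤ n := by
    intro j _ hne
    by_contra hgt
    push_neg at hgt
    apply hne
    have hc0 : PowerSeries.coeff n (eC F ^ (rr F ^ j - 1)) = 0 := by
      have hdvd : (PowerSeries.X : PowerSeries (K F)) ^ (rr F ^ j - 1)
          ∣ eC F ^ (rr F ^ j - 1) := pow_dvd_pow_of_dvd ⟨u, heCX⟩ _
      exact PowerSeries.X_pow_dvd_iff.mp hdvd n hgt
    rw [hS2 j, hc0]
    simp
  have hRHS : ∑ j ∈ (Finset.range (n + 1)).filter (fun j => (rr F) ^ j - 1 ≤ n),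
        ((-1 : K F) ^ j * D F j / L F j ^ 2) * S2C n ((rr F) ^ j - 1)
      = Cf F n * ∑ j ∈ Finset.range (n + 1),
          (-1 : K F) ^ j / L F j * PowerSeries.coeff n (eC F ^ (rr F ^ j - 1)) := by
    rw [Finset.sum_filter_of_ne hvanish, Finset.mul_sum]
    apply Finset.sum_congr rfl
    intro j _
    rw [hS2 j, hCfj j]
    have hD := D_ne F j
    have hL := L_ne F j
    field_simp
  rw [hRHS, ← hcoeffP, ← hagree n le_rfl, hcoeffA, mul_comm, div_mul_cancel₀ _ (Cf_ne F n)]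
end
end

section
/- For all integers n ≥ 1 and m ≥ 1, the n-th Cauchy number of order m satisfies c_n^{(m)} = (−1)^n Σ_{k=1}^{n} (−1)^k Σ [ multinomial(n; i_1, …, i_k) / (binom(i_1+m, m) ⋯ binom(i_k+m, m)) ] · S1(i_1+m, m) ⋯ S1(i_k+m, m), where the inner sum runs over all k-tuples of integers i_1, …, i_k ≥ 1 with i_1 + ⋯ + i_k = n, multinomial(n; i_1,…,i_k) = n!/(i_1! ⋯ i_k!), and S1 denotes the unsigned Stirling numbers of the first kind. -/
open scoped Classical
open PowerSeries Finset

noncomputable section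

/-- The formal power series `log(1+z) = Σ_{m ≥ 1} (-1)^{m-1} z^m / m` in `ℚ⟦z⟧`. -/
def log1p : PowerSeries ℚ :=
  PowerSeries.mk fun m => if m = 0 then 0 else (-1 : ℚ) ^ (m - 1) / m

/-- The formal power series `log(1+z)/z` in `ℚ⟦z⟧`. -/
def log1pDivZ : PowerSeries ℚ :=
  PowerSeries.mk fun n => PowerSeries.coeff (n + 1) log1p

/-- The formal power series `-log(1-t) = Σ_{m ≥ 1} t^m / m` in `ℚ⟦t⟧`. -/
def negLog1m : PowerSeries ℚ :=
  PowerSeries.mk fun m => if m = 0 then 0 else 1 / (m : ℚ)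

lemma log1p_eq_X_mul : log1p = X * log1pDivZ := by
  ext j
  cases j with
  | zero => simp [log1p, PowerSeries.coeff_zero_eq_constantCoeff]
  | succ j => rw [PowerSeries.coeff_succ_X_mul]; simp [log1pDivZ]

lemma log1p_eq_neg_rescale : log1p = -(PowerSeries.rescale (-1) negLog1m) := by
  ext j
  rw [map_neg, PowerSeries.coeff_rescale]
  cases j with
  | zero => simp [log1p, negLog1m]
  | succ j =>
    simp only [log1p, negLog1m, coeff_mk, Nat.succ_ne_zero, if_false, Nat.add_sub_cancel]
    push_cast
    ring

lemma coeff_log1p_pow (m j : ℕ) :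
    PowerSeries.coeff j (log1p ^ m)
      = (-1 : ℚ) ^ (j + m) * PowerSeries.coeff j (negLog1m ^ m) := by
  rw [log1p_eq_neg_rescale, neg_pow, ← map_pow]
  have : ((-1 : ℚ⟦X⟧) ^ m) = PowerSeries.C ((-1 : ℚ) ^ m) := by
    rw [map_pow, map_neg, map_one]
  rw [this, PowerSeries.coeff_C_mul, PowerSeries.coeff_rescale]
  ring

lemma coeff_log1pDivZ_pow (m j : ℕ) :
    PowerSeries.coeff j (log1pDivZ ^ m)
      = (-1 : ℚ) ^ j * PowerSeries.coeff (j + m) (negLog1m ^ m) := by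
  have h : PowerSeries.coeff (j + m) (log1p ^ m) = PowerSeries.coeff j (log1pDivZ ^ m) := by
    rw [log1p_eq_X_mul, mul_pow, PowerSeries.coeff_X_pow_mul]
  rw [← h, coeff_log1p_pow]
  have : (-1 : ℚ) ^ (j + m + m) = (-1 : ℚ) ^ j := by
    rw [pow_add, pow_add, mul_assoc, ← pow_add, ← two_mul, pow_mul]
    norm_num
  rw [this]

lemma coeff_inv_geom (C G : ℚ⟦X⟧) (hCG : C * (1 + G) = 1)
    (hG0 : PowerSeries.constantCoeff G = 0) (n : ℕ) :
    PowerSeries.coeff n C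
      = ∑ k ∈ Finset.range (n + 1), (-1 : ℚ) ^ k * PowerSeries.coeff n (G ^ k) := by
  set P : ℚ⟦X⟧ := ∑ k ∈ Finset.range (n + 1), (-G) ^ k with hP
  have hPF : P * (1 + G) = 1 - (-G) ^ (n + 1) := by
    have := geom_sum_mul (-G) (n + 1)
    have h2 : P * (-G - 1) = (-G) ^ (n + 1) - 1 := this
    have : P * (1 + G) = -(P * (-G - 1)) := by ring
    rw [this, h2]; ring
  have hPC : P = C - C * (-G) ^ (n + 1) := by
    calc P = P * (C * (1 + G)) := by rw [hCG, mul_one]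
    _ = C * (P * (1 + G)) := by ring
    _ = C * (1 - (-G) ^ (n + 1)) := by rw [hPF]
    _ = C - C * (-G) ^ (n + 1) := by ring
  have hdvd : (X : ℚ⟦X⟧) ^ (n + 1) ∣ C * (-G) ^ (n + 1) :=
    Dvd.dvd.mul_left (pow_dvd_pow_of_dvd (PowerSeries.X_dvd_iff.mpr (by simp [hG0])) _) C
  have hzero : PowerSeries.coeff n (C * (-G) ^ (n + 1)) = 0 :=
    PowerSeries.X_pow_dvd_iff.mp hdvd n (Nat.lt_succ_self n)
  have : PowerSeries.coeff n P = PowerSeries.coeff n C := by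
    rw [hPC, map_sub, hzero, sub_zero]
  rw [← this, hP, map_sum]
  refine Finset.sum_congr rfl fun k _ => ?_
  have h1 : (-G) ^ k = PowerSeries.C ((-1 : ℚ) ^ k) * G ^ k := by
    rw [neg_pow, map_pow, map_neg, map_one]
  rw [h1, PowerSeries.coeff_C_mul]

lemma coeff_pow_piFinset (G : ℚ⟦X⟧) (hG0 : PowerSeries.constantCoeff G = 0)
    (k n : ℕ) :
    PowerSeries.coeff n (G ^ k)
      = ∑ i ∈ (Fintype.piFinset fun _ : Fin k => Finset.Icc 1 n).filter
          (fun i => ∑ t, i t = n),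
        ∏ t, PowerSeries.coeff (i t) G := by
  have hpow : G ^ k = ∏ _t : Fin k, G := by simp
  rw [hpow, PowerSeries.coeff_prod]
  rw [← Finset.sum_filter_of_ne (p := fun l : Fin k →₀ ℕ => ∀ t, 1 ≤ l t)
    (f := fun l => ∏ t, PowerSeries.coeff (l t) G) ?_]
  · refine Finset.sum_nbij' (fun l => ⇑l) (fun i => Finsupp.equivFunOnFinite.symm i) ?_ ?_ ?_ ?_ ?_
    · intro l hl
      simp only [Finset.mem_filter, Finset.mem_finsuppAntidiag] at hl
      obtain ⟨⟨hsum, -⟩, hpos⟩ := hl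
      simp only [Finset.mem_filter, Fintype.mem_piFinset, Finset.mem_Icc]
      refine ⟨fun t => ⟨hpos t, ?_⟩, hsum⟩
      rw [← hsum]
      exact Finset.single_le_sum (f := fun t => l t) (fun _ _ => Nat.zero_le _) (Finset.mem_univ t)
    · intro i hi
      simp only [Finset.mem_filter, Fintype.mem_piFinset, Finset.mem_Icc] at hi
      obtain ⟨hmem, hsum⟩ := hi
      simp only [Finset.mem_filter, Finset.mem_finsuppAntidiag]
      exact ⟨⟨by simpa using hsum, Finset.subset_univ _⟩, fun t => by simpa using (hmem t).1⟩
    · intro l _; exact Finsupp.equivFunOnFinite.symm_apply_apply l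
    · intro i _; exact Finsupp.equivFunOnFinite.apply_symm_apply i
    · intro l _; rfl
  · intro l hl hne
    by_contra hforall
    push_neg at hforall
    obtain ⟨t, ht⟩ := hforall
    apply hne
    apply Finset.prod_eq_zero (Finset.mem_univ t)
    have : l t = 0 := by omega
    rw [this]
    simpa using hG0

/-- Proposition 3: for `n, m ≥ 1`, the Cauchy number of order `m` satisfies
`c_n^{(m)} = (-1)^n Σ_{k=1}^n (-1)^k Σ_{i_1,…,i_k ≥ 1, i_1+⋯+i_k = n}
  (n!/(i_1!⋯i_k!)) / (C(i_1+m, m)⋯C(i_k+m, m)) · S1(i_1+m, m)⋯S1(i_k+m, m)`. -/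
theorem cauchyHigherOrder_eq_sum_over_tuples
    (cho : ℕ → ℕ → ℚ) (S1 : ℕ → ℕ → ℚ)
    (hcho : ∀ m : ℕ,
      (PowerSeries.mk fun n => cho m n / n.factorial) * log1pDivZ ^ m = 1)
    (hS1 : ∀ n k : ℕ,
      PowerSeries.coeff n (negLog1m ^ k) / k.factorial = S1 n k / n.factorial)
    (n m : ℕ) (hn : 1 ≤ n) (hm : 1 ≤ m) :
    cho m n = (-1 : ℚ) ^ n * ∑ k ∈ Finset.Icc 1 n, (-1 : ℚ) ^ k *
      ∑ i ∈ (Fintype.piFinset fun _ : Fin k => Finset.Icc 1 n).filter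
          (fun i => ∑ t, i t = n),
        ((n.factorial : ℚ) / ∏ t, ((i t).factorial : ℚ)) /
            (∏ t, (Nat.choose (i t + m) m : ℚ)) *
          ∏ t, S1 (i t + m) m := by
  have hF0 : PowerSeries.constantCoeff (log1pDivZ ^ m) = 1 := by
    rw [map_pow]
    have h1 : PowerSeries.constantCoeff log1pDivZ = 1 := by
      simp [log1pDivZ, log1p]
    rw [h1, one_pow]
  set G : ℚ⟦X⟧ := log1pDivZ ^ m - 1 with hG
  have hG0 : PowerSeries.constantCoeff G = 0 := by
    rw [hG, map_sub, hF0, map_one, sub_self]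
  have hCG : (PowerSeries.mk fun n => cho m n / n.factorial) * (1 + G) = 1 := by
    have : (1 : ℚ⟦X⟧) + G = log1pDivZ ^ m := by rw [hG]; ring
    rw [this]; exact hcho m
  have hcoeffC : cho m n / n.factorial
      = ∑ k ∈ Finset.range (n + 1), (-1 : ℚ) ^ k * PowerSeries.coeff n (G ^ k) := by
    have h := coeff_inv_geom _ G hCG hG0 n
    simpa using h
  -- coefficient of G
  have hS1' : ∀ j : ℕ, PowerSeries.coeff j (negLog1m ^ m)
      = S1 j m * m.factorial / j.factorial := by
    intro j
    have h := hS1 j m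
    have hm0 : (m.factorial : ℚ) ≠ 0 := by positivity
    have : PowerSeries.coeff j (negLog1m ^ m)
        = (PowerSeries.coeff j (negLog1m ^ m) / m.factorial) * m.factorial := by
      field_simp
    rw [this, h]; ring
  have hGcoeff : ∀ j : ℕ, 1 ≤ j → PowerSeries.coeff j G
      = (-1 : ℚ) ^ j * (S1 (j + m) m / (j.factorial * ((j + m).choose m))) := by
    intro j hj
    have h1 : PowerSeries.coeff j G = PowerSeries.coeff j (log1pDivZ ^ m) := by
      rw [hG, map_sub, PowerSeries.coeff_one, if_neg (by omega), sub_zero]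
    rw [h1, coeff_log1pDivZ_pow, hS1']
    have hnat := Nat.choose_mul_factorial_mul_factorial (show m ≤ j + m from le_add_self)
    rw [Nat.add_sub_cancel] at hnat
    have hfac : ((j + m).factorial : ℚ)
        = ((j + m).choose m : ℚ) * m.factorial * j.factorial := by exact_mod_cast hnat.symm
    rw [hfac]
    have h2 : (m.factorial : ℚ) ≠ 0 := by positivity
    have h3 : (j.factorial : ℚ) ≠ 0 := by positivity
    have h4 : (((j + m).choose m : ℕ) : ℚ) ≠ 0 := by
      exact_mod_cast (Nat.choose_pos (show m ≤ j + m from le_add_self)).ne'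
    field_simp
  -- restrict the range sum to Icc 1 n
  have hrange : ∑ k ∈ Finset.range (n + 1), (-1 : ℚ) ^ k * PowerSeries.coeff n (G ^ k)
      = ∑ k ∈ Finset.Icc 1 n, (-1 : ℚ) ^ k * PowerSeries.coeff n (G ^ k) := by
    refine (Finset.sum_subset (fun x hx => ?_) (fun x hx hnx => ?_)).symm
    · simp only [Finset.mem_Icc] at hx; simp only [Finset.mem_range]; omega
    · simp only [Finset.mem_range] at hx
      simp only [Finset.mem_Icc, not_and, not_le] at hnx
      have hx0 : x = 0 := by omega
      subst hx0
      simp [PowerSeries.coeff_one, Nat.one_le_iff_ne_zero.mp hn]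
  have hne : (n.factorial : ℚ) ≠ 0 := by positivity
  have hstart : cho m n = (n.factorial : ℚ) * (cho m n / n.factorial) := by field_simp
  rw [hstart, hcoeffC, hrange, Finset.mul_sum, Finset.mul_sum]
  refine Finset.sum_congr rfl fun k hk => ?_
  rw [coeff_pow_piFinset G hG0 k n, ← mul_assoc, ← mul_assoc, Finset.mul_sum, Finset.mul_sum]
  refine Finset.sum_congr rfl fun i hi => ?_
  simp only [Finset.mem_filter, Fintype.mem_piFinset, Finset.mem_Icc] at hi
  obtain ⟨hmem, hsum⟩ := hi
  have hprod : ∏ t, PowerSeries.coeff (i t) G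
      = (-1 : ℚ) ^ n * ∏ t, (S1 (i t + m) m / ((i t).factorial * ((i t + m).choose m))) := by
    rw [Finset.prod_congr rfl fun t _ => hGcoeff (i t) (hmem t).1, Finset.prod_mul_distrib,
      Finset.prod_pow_eq_pow_sum, hsum]
  rw [hprod]
  rw [Finset.prod_div_distrib, Finset.prod_mul_distrib]
  push_cast
  ring
end
end

section
/- For all integers n ≥ 1 and m ≥ 1, the n-th Cauchy number of order m satisfies c_n^{(m)} = (−1)^n Σ_{k=1}^{n} (−1)^k binom(n+1, k+1) Σ [ multinomial(n; i_1, …, i_k) / (binom(i_1+m, m) ⋯ binom(i_k+m, m)) ] · S1(i_1+m, m) ⋯ S1(i_k+m, m), where the inner sum runs over all k-tuples of integers i_1, …, i_k ≥ 0 with i_1 + ⋯ + i_k = n, multinomial(n; i_1,…,i_k) = n!/(i_1! ⋯ i_k!), and S1 denotes the unsigned Stirling numbers of the first kind. -/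
open scoped Classical
open PowerSeries Finset

noncomputable section

/-! ### Auxiliary lemmas -/

lemma alt_choose (N j : ℕ) (hj : j < N) :
    ∑ k ∈ Finset.range (N + 1), (-1 : ℚ) ^ k * (N.choose k) * (k.choose j) = 0 := by
  rw [Finset.range_eq_Ico, ← Finset.sum_Ico_consecutive _ (Nat.zero_le j) (by omega : j ≤ N + 1)]
  have h1 : ∑ k ∈ Finset.Ico 0 j, (-1 : ℚ) ^ k * (N.choose k) * (k.choose j) = 0 := by
    apply Finset.sum_eq_zero
    intro k hk
    simp only [Finset.mem_Ico] at hk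
    rw [Nat.choose_eq_zero_of_lt hk.2]
    simp
  rw [h1, zero_add, Finset.sum_Ico_eq_sum_range]
  have h2 : N + 1 - j = (N - j) + 1 := by omega
  rw [h2]
  have h3 : ∀ r ∈ Finset.range (N - j + 1),
      (-1 : ℚ) ^ (j + r) * (N.choose (j + r)) * ((j + r).choose j)
        = ((-1 : ℚ) ^ j * (N.choose j)) * ((-1 : ℚ) ^ r * ((N - j).choose r)) := by
    intro r hr
    simp only [Finset.mem_range] at hr
    have hkn : j + r ≤ N := by omega
    have := Nat.choose_mul (n := N) (Nat.le_add_right j r)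
    rw [Nat.add_sub_cancel_left] at this
    have : ((N.choose (j + r)) * ((j + r).choose j) : ℚ) = (N.choose j) * ((N - j).choose r) := by
      exact_mod_cast congrArg (Nat.cast : ℕ → ℚ) this
    rw [pow_add]
    linear_combination ((-1 : ℚ) ^ j * (-1 : ℚ) ^ r) * this
  rw [Finset.sum_congr rfl h3, ← Finset.mul_sum]
  have h4 : ∑ r ∈ Finset.range (N - j + 1), (-1 : ℚ) ^ r * ((N - j).choose r) = 0 := by
    have := Int.alternating_sum_range_choose_of_ne (n := N - j) (by omega)
    exact_mod_cast congrArg (Int.cast : ℤ → ℚ) this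
  rw [h4, mul_zero]

lemma comb_ident : ∀ n j : ℕ, 1 ≤ j → j ≤ n →
    ∑ k ∈ Finset.Icc 1 n, (-1 : ℚ) ^ k * ((n + 1).choose (k + 1)) * (k.choose j)
      = (-1 : ℚ) ^ j := by
  intro n
  induction n with
  | zero => intro j h1 h2; omega
  | succ n ih =>
    intro j hj1 hj2
    have pascal : ∀ k, ((n + 1 + 1).choose (k + 1) : ℚ)
        = ((n + 1).choose k : ℚ) + ((n + 1).choose (k + 1) : ℚ) := by
      intro k
      exact_mod_cast congrArg (Nat.cast : ℕ → ℚ) (Nat.choose_succ_succ (n + 1) k)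
    have split : ∑ k ∈ Finset.Icc 1 (n + 1), (-1 : ℚ) ^ k * ((n + 2).choose (k + 1)) * (k.choose j)
        = (∑ k ∈ Finset.Icc 1 (n + 1), (-1 : ℚ) ^ k * ((n + 1).choose k) * (k.choose j))
          + ∑ k ∈ Finset.Icc 1 (n + 1), (-1 : ℚ) ^ k * ((n + 1).choose (k + 1)) * (k.choose j) := by
      rw [← Finset.sum_add_distrib]
      apply Finset.sum_congr rfl
      intro k _
      have : ((n + 2).choose (k + 1) : ℚ) = ((n + 1).choose k : ℚ) + ((n + 1).choose (k + 1)) := by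
        exact_mod_cast pascal k
      rw [this]; ring
    rcases Nat.lt_or_ge j (n + 1) with hlt | hge
    · have first : ∑ k ∈ Finset.Icc 1 (n + 1),
          (-1 : ℚ) ^ k * ((n + 1).choose k) * (k.choose j) = 0 := by
        have e : ∑ k ∈ Finset.range (n + 2), (-1 : ℚ) ^ k * ((n + 1).choose k) * (k.choose j)
            = ((-1 : ℚ) ^ 0 * ((n + 1).choose 0) * ((0 : ℕ).choose j))
              + ∑ k ∈ Finset.Icc 1 (n + 1), (-1 : ℚ) ^ k * ((n + 1).choose k) * (k.choose j) := by
          rw [Finset.range_eq_Ico, Finset.sum_eq_sum_Ico_succ_bot (by omega)]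
          congr 1
        have z0 : ((0 : ℕ).choose j : ℚ) = 0 := by
          rw [Nat.choose_eq_zero_of_lt (by omega)]; simp
        rw [alt_choose (n + 1) j hlt, z0] at e
        simp at e
        linarith [e]
      have second : ∑ k ∈ Finset.Icc 1 (n + 1),
          (-1 : ℚ) ^ k * ((n + 1).choose (k + 1)) * (k.choose j)
          = ∑ k ∈ Finset.Icc 1 n, (-1 : ℚ) ^ k * ((n + 1).choose (k + 1)) * (k.choose j) := by
        rw [Finset.sum_Icc_succ_top (by omega : 1 ≤ n + 1)]
        rw [Nat.choose_eq_zero_of_lt (by omega : n + 1 < n + 1 + 1)]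
        simp
      rw [show n + 1 + 1 = n + 2 from rfl] at split
      rw [split, first, zero_add, second, ih j hj1 (by omega)]
    · have hj : j = n + 1 := by omega
      subst hj
      rw [Finset.sum_eq_single_of_mem (n + 1) (by simp)]
      · simp
      · intro k hk hne
        simp only [Finset.mem_Icc] at hk
        rw [Nat.choose_eq_zero_of_lt (by omega : k < n + 1)]
        simp

lemma coeff_pow_pi (f : PowerSeries ℚ) (k n : ℕ) :
    PowerSeries.coeff n (f ^ k)
      = ∑ i ∈ (Fintype.piFinset fun _ : Fin k => Finset.range (n + 1)).filter
          (fun i => ∑ t, i t = n), ∏ t, PowerSeries.coeff (i t) f := by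
  classical
  have h1 : f ^ k = ∏ _t : Fin k, f := by
    rw [Finset.prod_const, Finset.card_univ, Fintype.card_fin]
  rw [h1, PowerSeries.coeff_prod]
  refine Finset.sum_nbij' (fun l => (l : Fin k → ℕ))
    (fun i => Finsupp.equivFunOnFinite.symm i) ?_ ?_ ?_ ?_ ?_
  · intro l hl
    rw [Finset.mem_finsuppAntidiag] at hl
    simp only [Finset.mem_filter, Fintype.mem_piFinset, Finset.mem_range]
    constructor
    · intro t
      have h := Finset.single_le_sum (f := fun s => l s) (fun s _ => Nat.zero_le _)
        (Finset.mem_univ t)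
      rw [hl.1] at h
      exact Nat.lt_succ_of_le h
    · exact hl.1
  · intro i hi
    simp only [Finset.mem_filter] at hi
    rw [Finset.mem_finsuppAntidiag]
    refine ⟨?_, Finset.subset_univ _⟩
    simpa using hi.2
  · intro l _; exact Finsupp.equivFunOnFinite.symm_apply_apply l
  · intro i _; exact Finsupp.equivFunOnFinite.apply_symm_apply i
  · intro l hl
    rfl

lemma coeff_pow_zero_of_lt {h : PowerSeries ℚ} (h0 : constantCoeff h = 0)
    {n j : ℕ} (hnj : n < j) : PowerSeries.coeff n (h ^ j) = 0 := by
  obtain ⟨h', rfl⟩ := PowerSeries.X_dvd_iff.mpr h0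
  rw [mul_pow, coeff_X_pow_mul']
  rw [if_neg (by omega)]

lemma sum_range_ext {u : ℕ → ℚ} {a b : ℕ} (ha : ∀ j, a < j → u j = 0)
    (hb : ∀ j, b < j → u j = 0) :
    ∑ j ∈ Finset.range (a + 1), u j = ∑ j ∈ Finset.range (b + 1), u j := by
  have h1 := Finset.sum_subset (Finset.range_subset_range.2 (by omega : a + 1 ≤ max a b + 1))
      (fun x hx hnx => ha x (by simp only [Finset.mem_range] at hx hnx; omega))
  have h2 := Finset.sum_subset (Finset.range_subset_range.2 (by omega : b + 1 ≤ max a b + 1))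
      (fun x hx hnx => hb x (by simp only [Finset.mem_range] at hx hnx; omega))
  exact h1.trans h2.symm

lemma coeff_neg_pow (h : PowerSeries ℚ) (j n : ℕ) :
    PowerSeries.coeff n ((-h) ^ j) = (-1 : ℚ) ^ j * PowerSeries.coeff n (h ^ j) := by
  have : (-h) ^ j = PowerSeries.C ((-1 : ℚ) ^ j) * h ^ j := by
    rw [neg_pow]
    congr 1
    rw [map_pow, map_neg, map_one]
  rw [this, PowerSeries.coeff_C_mul]

lemma coeff_G_pow (G : PowerSeries ℚ) (hG : constantCoeff G = 1) (n k : ℕ) :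
    PowerSeries.coeff n (G ^ k)
      = ∑ j ∈ Finset.range (n + 1), (k.choose j : ℚ) * PowerSeries.coeff n ((G - 1) ^ j) := by
  set h := G - 1 with hh
  have h0 : constantCoeff h = 0 := by simp [hh, hG]
  have hGh : G = 1 + h := by ring
  have expand : G ^ k = ∑ j ∈ Finset.range (k + 1), h ^ j * ((k.choose j : ℕ) : ℚ⟦X⟧) := by
    rw [hGh, add_comm, add_pow]
    apply Finset.sum_congr rfl
    intro j _
    rw [one_pow, mul_one]
  rw [expand, map_sum]
  have e : ∀ j, PowerSeries.coeff n (h ^ j * ((k.choose j : ℕ) : ℚ⟦X⟧))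
      = (k.choose j : ℚ) * PowerSeries.coeff n (h ^ j) := fun j => by
    rw [← map_natCast (PowerSeries.C (R := ℚ)), mul_comm, PowerSeries.coeff_C_mul]
  rw [Finset.sum_congr rfl fun j _ => e j]
  exact sum_range_ext
    (fun j hj => by rw [Nat.choose_eq_zero_of_lt hj]; simp)
    (fun j hj => by rw [coeff_pow_zero_of_lt h0 hj, mul_zero])

lemma coeff_inv_eq (G C : PowerSeries ℚ) (hG : constantCoeff G = 1)
    (hCG : C * G = 1) (n : ℕ) (hn : 1 ≤ n) :
    PowerSeries.coeff n C
      = ∑ j ∈ Finset.Icc 1 n, (-1 : ℚ) ^ j * PowerSeries.coeff n ((G - 1) ^ j) := by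
  set h := G - 1 with hh
  have h0 : constantCoeff h = 0 := by simp [hh, hG]
  set S := ∑ j ∈ Finset.range (n + 1), (-h) ^ j with hS
  have hgeom : S * G = 1 - (-h) ^ (n + 1) := by
    have h1 := geom_sum_mul (-h) (n + 1)
    have hGh : -h - 1 = -G := by rw [hh]; ring
    calc S * G = -(S * (-h - 1)) := by rw [hGh]; ring
      _ = -((-h) ^ (n + 1) - 1) := by rw [hS, h1]
      _ = 1 - (-h) ^ (n + 1) := by ring
  have hCS : S = C - C * (-h) ^ (n + 1) := by
    calc S = S * (C * G) := by rw [hCG, mul_one]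
      _ = C * (S * G) := by ring
      _ = C * (1 - (-h) ^ (n + 1)) := by rw [hgeom]
      _ = C - C * (-h) ^ (n + 1) := by ring
  have hzero : PowerSeries.coeff n (C * (-h) ^ (n + 1)) = 0 := by
    obtain ⟨h', hhX⟩ := PowerSeries.X_dvd_iff.mpr h0
    rw [neg_pow, hhX, mul_pow, show C * ((-1 : ℚ⟦X⟧) ^ (n + 1) * (X ^ (n + 1) * h' ^ (n + 1)))
      = X ^ (n + 1) * (C * (-1 : ℚ⟦X⟧) ^ (n + 1) * h' ^ (n + 1)) from by ring,
      coeff_X_pow_mul', if_neg (by omega)]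
  have hc : PowerSeries.coeff n S = PowerSeries.coeff n C := by
    rw [hCS, map_sub, hzero, sub_zero]
  rw [← hc, hS, map_sum]
  rw [Finset.sum_congr rfl fun j _ => coeff_neg_pow h j n]
  rw [Finset.range_eq_Ico, Finset.sum_eq_sum_Ico_succ_bot (by omega : 0 < n + 1)]
  have hz : PowerSeries.coeff n (h ^ 0) = 0 := by
    rw [pow_zero, PowerSeries.coeff_one, if_neg (by omega)]
  rw [hz, mul_zero, zero_add, Finset.Ico_add_one_right_eq_Icc]

lemma log1p_eq : log1p = -(rescale (-1) negLog1m) := by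
  ext n
  simp only [log1p, negLog1m, map_neg, coeff_rescale, coeff_mk]
  rcases n with _ | n
  · simp
  · simp only [Nat.succ_ne_zero, if_false]
    rw [Nat.succ_sub_one, pow_succ]
    ring

lemma X_mul_log1pDivZ : X * log1pDivZ = log1p := by
  ext n
  rcases n with _ | n
  · simp [log1p]
  · rw [coeff_succ_X_mul]
    simp [log1pDivZ]

lemma constantCoeff_log1pDivZ : constantCoeff log1pDivZ = 1 := by
  rw [← coeff_zero_eq_constantCoeff]
  simp [log1pDivZ, log1p]

lemma coeff_log1pDivZ_pow_s7 (S1 : ℕ → ℕ → ℚ)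
    (hS1 : ∀ n k : ℕ,
      PowerSeries.coeff n (negLog1m ^ k) / k.factorial = S1 n k / n.factorial)
    (i m : ℕ) :
    PowerSeries.coeff i (log1pDivZ ^ m)
      = (-1 : ℚ) ^ i * (S1 (i + m) m * m.factorial / (i + m).factorial) := by
  have h1 : PowerSeries.coeff i (log1pDivZ ^ m)
      = PowerSeries.coeff (i + m) (log1p ^ m) := by
    rw [← X_mul_log1pDivZ, mul_pow, coeff_X_pow_mul]
  have h2 : log1p ^ m = PowerSeries.C ((-1 : ℚ) ^ m) * rescale (-1) (negLog1m ^ m) := by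
    rw [log1p_eq, neg_pow, map_pow, map_pow, map_neg, map_one]
  have h3 : PowerSeries.coeff (i + m) (negLog1m ^ m)
      = S1 (i + m) m * m.factorial / (i + m).factorial := by
    have := hS1 (i + m) m
    have hfm : (m.factorial : ℚ) ≠ 0 := Nat.cast_ne_zero.2 m.factorial_ne_zero
    field_simp at this ⊢
    linarith [this]
  rw [h1, h2, PowerSeries.coeff_C_mul, coeff_rescale, h3]
  have hsign : (-1 : ℚ) ^ m * (-1 : ℚ) ^ (i + m) = (-1 : ℚ) ^ i := by
    rw [pow_add]
    rw [show (-1 : ℚ) ^ m * ((-1 : ℚ) ^ i * (-1 : ℚ) ^ m)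
      = ((-1 : ℚ) ^ m * (-1 : ℚ) ^ m) * (-1 : ℚ) ^ i from by ring, ← pow_add]
    rw [← two_mul, pow_mul]
    norm_num
  rw [← mul_assoc, hsign]

/-- Proposition 4: for `n, m ≥ 1`, the Cauchy number of order `m` satisfies
`c_n^{(m)} = (-1)^n Σ_{k=1}^n (-1)^k C(n+1, k+1) Σ_{i_1,…,i_k ≥ 0, i_1+⋯+i_k = n}
  (n!/(i_1!⋯i_k!)) / (C(i_1+m, m)⋯C(i_k+m, m)) · S1(i_1+m, m)⋯S1(i_k+m, m)`. -/
theorem cauchyHigherOrder_eq_sum_over_tuples_with_binom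
    (cho : ℕ → ℕ → ℚ) (S1 : ℕ → ℕ → ℚ)
    (hcho : ∀ m : ℕ,
      (PowerSeries.mk fun n => cho m n / n.factorial) * log1pDivZ ^ m = 1)
    (hS1 : ∀ n k : ℕ,
      PowerSeries.coeff n (negLog1m ^ k) / k.factorial = S1 n k / n.factorial)
    (n m : ℕ) (hn : 1 ≤ n) (hm : 1 ≤ m) :
    cho m n = (-1 : ℚ) ^ n * ∑ k ∈ Finset.Icc 1 n,
      (-1 : ℚ) ^ k * (Nat.choose (n + 1) (k + 1) : ℚ) *
      ∑ i ∈ (Fintype.piFinset fun _ : Fin k => Finset.range (n + 1)).filter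
          (fun i => ∑ t, i t = n),
        ((n.factorial : ℚ) / ∏ t, ((i t).factorial : ℚ)) /
            (∏ t, (Nat.choose (i t + m) m : ℚ)) *
          ∏ t, S1 (i t + m) m := by
  classical
  set G := log1pDivZ ^ m with hGdef
  set Cs := (PowerSeries.mk fun n => cho m n / n.factorial : PowerSeries ℚ) with hCs
  have hGc : constantCoeff G = 1 := by
    rw [hGdef, map_pow, constantCoeff_log1pDivZ, one_pow]
  have hCG : Cs * G = 1 := hcho m
  have hsq : (-1 : ℚ) ^ n * (-1 : ℚ) ^ n = 1 := by
    rw [← pow_add, ← two_mul, pow_mul]; norm_num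
  -- Step 1: inner sum equals (-1)^n * n! * coeff n (G^k)
  have hinner : ∀ k : ℕ,
      (∑ i ∈ (Fintype.piFinset fun _ : Fin k => Finset.range (n + 1)).filter
          (fun i => ∑ t, i t = n),
        ((n.factorial : ℚ) / ∏ t, ((i t).factorial : ℚ)) /
            (∏ t, (Nat.choose (i t + m) m : ℚ)) *
          ∏ t, S1 (i t + m) m)
      = (-1 : ℚ) ^ n * n.factorial * PowerSeries.coeff n (G ^ k) := by
    intro k
    rw [coeff_pow_pi, Finset.mul_sum]
    apply Finset.sum_congr rfl
    intro i hi
    simp only [Finset.mem_filter] at hi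
    have hisum : ∑ t, i t = n := hi.2
    have hco : ∀ t : Fin k, PowerSeries.coeff (i t) G
        = (-1 : ℚ) ^ (i t) * (S1 (i t + m) m * m.factorial / (i t + m).factorial) :=
      fun t => coeff_log1pDivZ_pow_s7 S1 hS1 (i t) m
    rw [Finset.prod_congr rfl fun t _ => hco t, Finset.prod_mul_distrib,
      Finset.prod_pow_eq_pow_sum, hisum]
    have hfac : ∀ t : Fin k,
        S1 (i t + m) m * m.factorial / (i t + m).factorial
          = S1 (i t + m) m / ((Nat.choose (i t + m) m : ℚ) * (i t).factorial) := by
      intro t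
      have h := Nat.choose_mul_factorial_mul_factorial (Nat.le_add_left m (i t))
      rw [Nat.add_sub_cancel] at h
      have hq : ((i t + m).factorial : ℚ)
          = (Nat.choose (i t + m) m : ℚ) * m.factorial * (i t).factorial := by
        exact_mod_cast congrArg (Nat.cast : ℕ → ℚ) h.symm
      rw [hq]
      have h1 : ((Nat.choose (i t + m) m : ℚ)) ≠ 0 :=
        Nat.cast_ne_zero.2 (Nat.choose_pos (Nat.le_add_left m (i t))).ne'
      have h2 : ((m.factorial : ℚ)) ≠ 0 := Nat.cast_ne_zero.2 m.factorial_ne_zero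
      have h3 : (((i t).factorial : ℚ)) ≠ 0 := Nat.cast_ne_zero.2 (i t).factorial_ne_zero
      field_simp
    rw [Finset.prod_congr rfl fun t _ => hfac t]
    have hprod : ∏ t : Fin k, S1 (i t + m) m / ((Nat.choose (i t + m) m : ℚ) * (i t).factorial)
        = (∏ t : Fin k, S1 (i t + m) m)
          / ((∏ t : Fin k, (Nat.choose (i t + m) m : ℚ)) * ∏ t : Fin k, ((i t).factorial : ℚ)) := by
      rw [Finset.prod_div_distrib, Finset.prod_mul_distrib]
    rw [hprod]
    linear_combination (-( (n.factorial : ℚ) * ((∏ t : Fin k, S1 (i t + m) m)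
      / ((∏ t : Fin k, (Nat.choose (i t + m) m : ℚ)) * ∏ t : Fin k, ((i t).factorial : ℚ))))) * hsq
  -- Step 2: rewrite the right-hand side
  have key : PowerSeries.coeff n Cs
      = ∑ k ∈ Finset.Icc 1 n, (-1 : ℚ) ^ k * (Nat.choose (n + 1) (k + 1) : ℚ) *
          PowerSeries.coeff n (G ^ k) := by
    rw [coeff_inv_eq G Cs hGc hCG n hn]
    have hb : ∀ k ∈ Finset.Icc 1 n, (-1 : ℚ) ^ k * (Nat.choose (n + 1) (k + 1) : ℚ) *
          PowerSeries.coeff n (G ^ k)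
        = ∑ j ∈ Finset.range (n + 1), (-1 : ℚ) ^ k * (Nat.choose (n + 1) (k + 1) : ℚ) *
            ((k.choose j : ℚ) * PowerSeries.coeff n ((G - 1) ^ j)) := by
      intro k _
      rw [coeff_G_pow G hGc n k, Finset.mul_sum]
    rw [Finset.sum_congr rfl hb, Finset.sum_comm]
    have hswap : ∀ j ∈ Finset.range (n + 1),
        (∑ k ∈ Finset.Icc 1 n, (-1 : ℚ) ^ k * (Nat.choose (n + 1) (k + 1) : ℚ) *
          ((k.choose j : ℚ) * PowerSeries.coeff n ((G - 1) ^ j)))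
        = (∑ k ∈ Finset.Icc 1 n, (-1 : ℚ) ^ k * ((n + 1).choose (k + 1) : ℚ) * (k.choose j : ℚ))
            * PowerSeries.coeff n ((G - 1) ^ j) := by
      intro j _
      rw [Finset.sum_mul]
      apply Finset.sum_congr rfl
      intro k _
      ring
    rw [Finset.sum_congr rfl hswap]
    rw [Finset.range_eq_Ico, Finset.sum_eq_sum_Ico_succ_bot (by omega : 0 < n + 1)]
    have hz0 : PowerSeries.coeff n ((G - 1) ^ 0) = 0 := by
      rw [pow_zero, PowerSeries.coeff_one, if_neg (by omega)]
    rw [hz0, mul_zero, zero_add, Finset.Ico_add_one_right_eq_Icc]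
    symm
    apply Finset.sum_congr rfl
    intro j hj
    simp only [Finset.mem_Icc] at hj
    rw [comb_ident n j hj.1 hj.2]
  -- Step 3: conclude
  have hfn : ((n.factorial : ℚ)) ≠ 0 := Nat.cast_ne_zero.2 n.factorial_ne_zero
  have hcn : cho m n = (n.factorial : ℚ) * PowerSeries.coeff n Cs := by
    rw [hCs, PowerSeries.coeff_mk]
    field_simp
  rw [hcn, key, Finset.mul_sum, Finset.mul_sum]
  apply Finset.sum_congr rfl
  intro k _
  rw [hinner k]
  linear_combination (-((-1 : ℚ) ^ k * ((Nat.choose (n + 1) (k + 1)) : ℚ)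
    * (PowerSeries.coeff n (G ^ k)) * (n.factorial : ℚ))) * hsq
end
end
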